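/- Let θ < θ̃ < 0. Then the function G(τ) = (τ^{θ̃−1} + (1−τ)^{θ̃−1})/(τ^{θ−1} + (1−τ)^{θ−1}) is strictly increasing on the interval (0, 1/2). -/

import Mathlib

open Real

/-- The function `G(τ) = (τ^{θ̃−1} + (1−τ)^{θ̃−1}) / (τ^{θ−1} + (1−τ)^{θ−1})`. -/
noncomputable def Gfun (θ θt : ℝ) (τ : ℝ) : ℝ :=
  (τ ^ (θt - 1) + (1 - τ) ^ (θt - 1)) / (τ ^ (θ - 1) + (1 - τ) ^ (θ - 1))

lemma hasDerivAt_aux (c x : ℝ) (hx : 0 < x) (hx1 : x < 1) :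
    HasDerivAt (fun τ : ℝ => τ ^ c + (1 - τ) ^ c)
      (c * x ^ (c - 1) - c * (1 - x) ^ (c - 1)) x := by
  have h1 : HasDerivAt (fun τ : ℝ => τ ^ c) (c * x ^ (c - 1)) x :=
    Real.hasDerivAt_rpow_const (Or.inl hx.ne')
  have hlin : HasDerivAt (fun τ : ℝ => 1 - τ) (-1) x := by
    simpa using (hasDerivAt_id x).const_sub 1
  have h2 := hlin.rpow_const (p := c) (Or.inl (show (1:ℝ) - x ≠ 0 by linarith))
  have := h1.add h2
  have e : c * x ^ (c - 1) - c * (1 - x) ^ (c - 1) = c * x ^ (c - 1) + -1 * c * (1 - x) ^ (c - 1) := by ring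
  rw [e]; exact this

lemma num_pos (a b x : ℝ) (hba : b < a) (ha : a < 0) (hx : 0 < x) (hx2 : x < 1/2) :
    0 < (a * x ^ (a-1) - a * (1-x) ^ (a-1)) * (x ^ b + (1-x) ^ b)
        - (x ^ a + (1-x) ^ a) * (b * x ^ (b-1) - b * (1-x) ^ (b-1)) := by
  set y := 1 - x with hy
  have hy0 : 0 < y := by rw [hy]; linarith
  have hxy : x < y := by rw [hy]; linarith
  have hr : 1 < y / x := (one_lt_div hx).mpr hxy
  set r := y / x with hrr
  have hrpos : 0 < r := by positivity
  have hyrx : y = r * x := by rw [hrr, div_mul_cancel₀ _ hx.ne']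
  have e : ∀ c : ℝ, y ^ c = r ^ c * x ^ c := fun c => by
    rw [hyrx, Real.mul_rpow hrpos.le hx.le]
  rw [e (a-1), e b, e a, e (b-1)]
  have fx : ∀ c : ℝ, x ^ c = x ^ (c-1) * x := fun c => by
    rw [Real.rpow_sub hx, Real.rpow_one, div_mul_cancel₀ _ hx.ne']
  have fr : ∀ c : ℝ, r ^ c = r ^ (c-1) * r := fun c => by
    rw [Real.rpow_sub hrpos, Real.rpow_one, div_mul_cancel₀ _ hrpos.ne']
  rw [fx a, fx b, fr a, fr b]
  have hp1 : r ^ (a-1) < 1 := Real.rpow_lt_one_of_one_lt_of_neg hr (by linarith)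
  have hq1 : r ^ (b-1) < r ^ (a-1) := (Real.rpow_lt_rpow_left_iff hr).mpr (by linarith)
  have hqpos : 0 < r ^ (b-1) := Real.rpow_pos_of_pos hrpos _
  have h1 : 0 < 1 - r ^ (a-1) := by linarith
  have h2 : 1 - r ^ (a-1) < 1 - r ^ (b-1) := by linarith
  have h3 : 1 + r ^ (b-1) * r < 1 + r ^ (a-1) * r := by nlinarith
  have h4 : 0 < 1 + r ^ (b-1) * r := by positivity
  have s1 : (-a) * (1 - r ^ (a-1)) < (-b) * (1 - r ^ (b-1)) :=
    mul_lt_mul'' (by linarith) h2 (by linarith) h1.le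
  have s2 : (-a) * (1 - r ^ (a-1)) * (1 + r ^ (b-1) * r)
      < (-b) * (1 - r ^ (b-1)) * (1 + r ^ (a-1) * r) :=
    mul_lt_mul'' s1 h3 (mul_nonneg (by linarith) h1.le) h4.le
  have hkey : b * (1 - r ^ (b-1)) * (1 + r ^ (a-1) * r)
      < a * (1 - r ^ (a-1)) * (1 + r ^ (b-1) * r) := by nlinarith [s2]
  have hfac : 0 < x ^ (a-1) * x ^ (b-1) * x := by positivity
  nlinarith [mul_lt_mul_of_pos_left hkey hfac]

/-- for `θ < θ̃ < 0`, the function `G` is strictly increasing on `(0, 1/2)`. -/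
theorem Gfun_strictMonoOn (θ θt : ℝ) (hθ : θ < θt) (hθt : θt < 0) :
    StrictMonoOn (Gfun θ θt) (Set.Ioo (0 : ℝ) (1 / 2)) := by
  have key : ∀ x ∈ Set.Ioo (0:ℝ) (1/2),
      HasDerivAt (Gfun θ θt)
        ((((θt-1) * x ^ (θt-1-1) - (θt-1) * (1-x) ^ (θt-1-1)) * (x ^ (θ-1) + (1-x) ^ (θ-1))
          - (x ^ (θt-1) + (1-x) ^ (θt-1)) * ((θ-1) * x ^ (θ-1-1) - (θ-1) * (1-x) ^ (θ-1-1)))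
          / (x ^ (θ-1) + (1-x) ^ (θ-1))^2) x := by
    intro x hx
    obtain ⟨hx0, hx2⟩ := hx
    have hx1 : x < 1 := by linarith
    have h1x : 0 < 1 - x := by linarith
    have hD : 0 < x ^ (θ-1) + (1-x) ^ (θ-1) := by positivity
    exact (hasDerivAt_aux (θt-1) x hx0 hx1).div (hasDerivAt_aux (θ-1) x hx0 hx1) hD.ne'
  apply strictMonoOn_of_deriv_pos (convex_Ioo _ _)
  · exact fun x hx => (key x hx).continuousAt.continuousWithinAt
  · intro x hx
    rw [interior_Ioo] at hx
    rw [(key x hx).deriv]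
    obtain ⟨hx0, hx2⟩ := hx
    have h1x : 0 < 1 - x := by linarith
    have hD : 0 < x ^ (θ-1) + (1-x) ^ (θ-1) := by positivity
    exact div_pos (num_pos (θt-1) (θ-1) x (by linarith) (by linarith) hx0 hx2) (by positivity)
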